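/- (Main order-bound theorem) Let C be a divisor, S and S' finite sets of rational points, and A_0, A_1, ..., A_n a sequence of divisors with A_i = A_{i-1} + P_i for rational points P_i. Define Δ = {i : A_i ∈ Γ_{P_i} and A_i - C ∉ Γ_{P_i}}, Δ' = {i : A_i ∉ Γ_{P_i} and A_i - C ∈ Γ_{P_i}}, I = {i : P_i ∈ S}, I' = {i : P_i ∈ S'}. Then γ(C; S, S') >= |Δ ∩ I'| + |Δ' ∩ I| - |Δ'|. -/

import Mathlib

noncomputable section

/-- Degree of a divisor, where divisors on the curve are modeled as finitely
supported integer valued functions on the set of rational points. -/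
def degr {Point : Type*} (D : Point →₀ ℤ) : ℤ := D.sum fun _ n => n

/-- An abstract model of a smooth projective absolutely irreducible curve over a field,
recording the data used in the paper: the dimension `l D` of the Riemann-Roch space
`L(D)`, the genus `g`, a canonical divisor `K`, and linear equivalence `lin`,
together with their basic properties (Riemann-Roch, monotonicity, semigroup
properties of nongaps, etc.). -/
structure Curve (Point : Type*) where
  /-- `l D = dim L(D)` -/
  l : (Point →₀ ℤ) → ℕ
  /-- the genus -/
  g : ℕ
  /-- a canonical divisor -/
  K : Point →₀ ℤ
  /-- linear equivalence of divisors -/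
  lin : (Point →₀ ℤ) → (Point →₀ ℤ) → Prop
  lin_refl : ∀ A, lin A A
  lin_symm : ∀ {A B}, lin A B → lin B A
  lin_trans : ∀ {A B C}, lin A B → lin B C → lin A C
  lin_add : ∀ {A B} (E : Point →₀ ℤ), lin A B → lin (A + E) (B + E)
  deg_lin : ∀ {A B}, lin A B → degr A = degr B
  l_lin : ∀ {A B}, lin A B → l A = l B
  l_zero : l 0 = 1
  l_neg : ∀ {D}, degr D < 0 → l D = 0
  l_mono : ∀ (D : Point →₀ ℤ) (P : Point), l D ≤ l (D + Finsupp.single P 1)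
  l_step : ∀ (D : Point →₀ ℤ) (P : Point), l (D + Finsupp.single P 1) ≤ l D + 1
  /-- Riemann-Roch -/
  rr : ∀ D : Point →₀ ℤ, (l D : ℤ) - l (K - D) = degr D + 1 - g
  lin_of_deg_zero : ∀ {D}, l D ≠ 0 → degr D = 0 → lin D 0
  /-- the semigroup property of `Γ_P` -/
  gamma_add : ∀ (P : Point) {A B}, l A ≠ l (A - Finsupp.single P 1) →
      l B ≠ l (B - Finsupp.single P 1) → l (A + B) ≠ l (A + B - Finsupp.single P 1)
  eff_add : ∀ {A B}, l A ≠ 0 → l B ≠ 0 → l (A + B) ≠ 0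
  point_nongap : ∀ {P Q : Point}, P ≠ Q →
      l (Finsupp.single P 1) ≠ l (Finsupp.single P 1 - Finsupp.single Q 1)

variable {Point : Type*}

/-- `Γ_P` : divisor (classes) with no base point at `P`, i.e. `L(A) ≠ L(A-P)`. -/
def GammaP (X : Curve Point) (P : Point) : Set (Point →₀ ℤ) :=
  {A | X.l A ≠ X.l (A - Finsupp.single P 1)}

/-- `Γ_S = ∩_{P ∈ S} Γ_P`, with the convention `Γ_∅ = Γ = {A : L(A) ≠ 0}`. -/
def GammaS (X : Curve Point) (S : Finset Point) : Set (Point →₀ ℤ) :=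
  {A | (S = ∅ → X.l A ≠ 0) ∧ ∀ P ∈ S, A ∈ GammaP X P}

/-- `Γ(C; S, S') = {A : A ∈ Γ_S and A - C ∈ Γ_{S'}}`. -/
def GammaSet (X : Curve Point) (C : Point →₀ ℤ) (S S' : Finset Point) :
    Set (Point →₀ ℤ) :=
  {A | A ∈ GammaS X S ∧ A - C ∈ GammaS X S'}

/-- `γ(C; S, S') = min {deg A : A ∈ Γ(C; S, S')}`. -/
def gammaMin (X : Curve Point) (C : Point →₀ ℤ) (S S' : Finset Point) : ℤ :=
  sInf (degr '' GammaSet X C S S')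

/-- `Δ = {i : A_i ∈ Γ_{P_i} and A_i - C ∉ Γ_{P_i}}` for indices `1 ≤ i ≤ n`. -/
def Delta (X : Curve Point) (C : Point →₀ ℤ) (n : ℕ) (A : ℕ → Point →₀ ℤ)
    (P : ℕ → Point) : Set ℕ :=
  {i | 1 ≤ i ∧ i ≤ n ∧ A i ∈ GammaP X (P i) ∧ A i - C ∉ GammaP X (P i)}

/-- `Δ' = {i : A_i ∉ Γ_{P_i} and A_i - C ∈ Γ_{P_i}}` for indices `1 ≤ i ≤ n`. -/
def Delta' (X : Curve Point) (C : Point →₀ ℤ) (n : ℕ) (A : ℕ → Point →₀ ℤ)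
    (P : ℕ → Point) : Set ℕ :=
  {i | 1 ≤ i ∧ i ≤ n ∧ A i ∉ GammaP X (P i) ∧ A i - C ∈ GammaP X (P i)}

section Aux
variable {Point : Type*}

lemma degr_add (A B : Point →₀ ℤ) : degr (A + B) = degr A + degr B := by
  classical
  exact Finsupp.sum_add_index' (fun _ => rfl) (fun _ _ _ => rfl)

lemma degr_zero : degr (0 : Point →₀ ℤ) = 0 := Finsupp.sum_zero_index

lemma degr_single (P : Point) (m : ℤ) : degr (Finsupp.single P m) = m :=
  Finsupp.sum_single_index rfl

lemma degr_neg (A : Point →₀ ℤ) : degr (-A) = - degr A := by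
  have h := degr_add A (-A)
  rw [add_neg_cancel, degr_zero] at h
  omega

lemma degr_sub (A B : Point →₀ ℤ) : degr (A - B) = degr A - degr B := by
  rw [sub_eq_add_neg, degr_add, degr_neg]; ring

variable (X : Curve Point)

lemma l_sub_le (A : Point →₀ ℤ) (P : Point) :
    X.l (A - Finsupp.single P 1) ≤ X.l A := by
  have h := X.l_mono (A - Finsupp.single P 1) P
  rwa [sub_add_cancel] at h

lemma l_le_sub_succ (A : Point →₀ ℤ) (P : Point) :
    X.l A ≤ X.l (A - Finsupp.single P 1) + 1 := by
  have h := X.l_step (A - Finsupp.single P 1) P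
  rwa [sub_add_cancel] at h

lemma gammaP_succ {A : Point →₀ ℤ} {P : Point} (h : A ∈ GammaP X P) :
    X.l A = X.l (A - Finsupp.single P 1) + 1 := by
  have h1 := l_sub_le X A P
  have h2 := l_le_sub_succ X A P
  have h3 : X.l A ≠ X.l (A - Finsupp.single P 1) := h
  omega

lemma l_ne_zero_of_gammaP {A : Point →₀ ℤ} {P : Point} (h : A ∈ GammaP X P) :
    X.l A ≠ 0 := by
  have := gammaP_succ X h; omega

lemma gammaS_l_ne_zero {A : Point →₀ ℤ} {S : Finset Point} (h : A ∈ GammaS X S) :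
    X.l A ≠ 0 := by
  rcases eq_or_ne S ∅ with hS | hS
  · exact h.1 hS
  · obtain ⟨Q, hQ⟩ := Finset.nonempty_iff_ne_empty.2 hS
    exact l_ne_zero_of_gammaP X (h.2 Q hQ)

lemma l_add_single_nat (A : Point →₀ ℤ) (Q : Point) (m : ℕ) :
    X.l A ≤ X.l (A + Finsupp.single Q (m : ℤ)) := by
  induction m with
  | zero => simp
  | succ m ih =>
      have h1 : A + Finsupp.single Q ((m + 1 : ℕ) : ℤ)
          = (A + Finsupp.single Q (m : ℤ)) + Finsupp.single Q 1 := by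
        push_cast
        rw [add_assoc, ← Finsupp.single_add]
      rw [h1]
      exact le_trans ih (X.l_mono _ Q)

end Aux
section Mono
variable {Point : Type*} (X : Curve Point)

lemma l_add_mono_of_forall (D : Point →₀ ℤ)
    (hD : ∀ P : Point, X.l D ≠ X.l (D - Finsupp.single P 1)) :
    ∀ E, X.l E ≤ X.l (E + D) := by
  classical
  by_cases hpt : Nonempty Point
  case neg =>
    intro E
    have hD0 : D = 0 := Finsupp.ext fun a => (hpt ⟨a⟩).elim
    rw [hD0, add_zero]
  obtain ⟨Q⟩ := hpt
  have hDl : X.l D ≠ 0 := by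
    have h1 := l_sub_le X D Q
    have h2 := hD Q
    omega
  suffices H : ∀ m : ℕ, ∀ E, (degr E).toNat = m → X.l E ≤ X.l (E + D) by
    intro E; exact H _ E rfl
  intro m
  induction m using Nat.strong_induction_on with
  | _ m ih =>
  intro E hm
  by_cases hE : X.l E = 0
  · rw [hE]; exact Nat.zero_le _
  have hdE : 0 ≤ degr E := le_of_not_gt fun h => hE (X.l_neg h)
  rcases eq_or_lt_of_le hdE with h0 | h0
  · -- degr E = 0
    have hlin := X.lin_of_deg_zero hE h0.symm
    have h1 : X.l (E + D) = X.l D := by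
      have h2 := X.l_lin (X.lin_add D hlin)
      rwa [zero_add] at h2
    have h2 : X.l E = 1 := by rw [X.l_lin hlin, X.l_zero]
    omega
  · -- degr E ≥ 1 : descent along Q
    have hex : ∃ k : ℕ, X.l (E - Finsupp.single Q (k : ℤ)) ≠ X.l E := by
      refine ⟨(degr E).toNat + 1, ?_⟩
      have hdeg : degr (E - Finsupp.single Q (((degr E).toNat + 1 : ℕ) : ℤ)) < 0 := by
        rw [degr_sub, degr_single]; omega
      rw [X.l_neg hdeg]
      omega
    set k := Nat.find hex with hkdef
    have hk : X.l (E - Finsupp.single Q (k : ℤ)) ≠ X.l E := Nat.find_spec hex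
    have hk1 : 1 ≤ k := by
      rcases Nat.eq_zero_or_pos k with h | h
      · exfalso; apply hk; rw [h]; norm_num
      · exact h
    have hkprev : X.l (E - Finsupp.single Q ((k : ℤ) - 1)) = X.l E := by
      have h1 : ¬ X.l (E - Finsupp.single Q ((k - 1 : ℕ) : ℤ)) ≠ X.l E :=
        Nat.find_min hex (by omega)
      have h2 : ((k - 1 : ℕ) : ℤ) = (k : ℤ) - 1 := by push_cast [hk1]; ring
      rw [h2] at h1
      exact not_not.mp h1
    set F := E - Finsupp.single Q ((k : ℤ) - 1) with hFdef
    have hFQ : F - Finsupp.single Q 1 = E - Finsupp.single Q (k : ℤ) := by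
      rw [hFdef, sub_sub, ← Finsupp.single_add]
      norm_num
    have hFmem : X.l F ≠ X.l (F - Finsupp.single Q 1) := by
      rw [hkprev, hFQ]
      exact fun h => hk h.symm
    have hFg : X.l F = X.l (F - Finsupp.single Q 1) + 1 := gammaP_succ X hFmem
    have hadd : X.l (F + D) ≠ X.l (F + D - Finsupp.single Q 1) :=
      X.gamma_add Q hFmem (hD Q)
    have haddg : X.l (F + D) = X.l (F + D - Finsupp.single Q 1) + 1 := gammaP_succ X hadd
    -- IH at F - Q
    have hdegFQ : degr (F - Finsupp.single Q 1) = degr E - k := by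
      rw [hFQ, degr_sub, degr_single]
    have hIH : X.l (F - Finsupp.single Q 1) ≤ X.l ((F - Finsupp.single Q 1) + D) := by
      apply ih (degr (F - Finsupp.single Q 1)).toNat
      · omega
      · rfl
    have hcomm : (F - Finsupp.single Q 1) + D = F + D - Finsupp.single Q 1 := by abel
    rw [hcomm] at hIH
    -- climb back up
    have hclimb : X.l (F + D) ≤ X.l (E + D) := by
      have h1 : E + D = (F + D) + Finsupp.single Q (((k - 1 : ℕ) : ℤ)) := by
        have h2 : ((k - 1 : ℕ) : ℤ) = (k : ℤ) - 1 := by push_cast [hk1]; ring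
        rw [h2, hFdef]
        abel
      rw [h1]
      exact l_add_single_nat X _ Q _
    omega

lemma l_add_mono : ∀ (D : Point →₀ ℤ), X.l D ≠ 0 → ∀ E, X.l E ≤ X.l (E + D) := by
  suffices H : ∀ m : ℕ, ∀ D : Point →₀ ℤ, (degr D).toNat = m → X.l D ≠ 0 →
      ∀ E, X.l E ≤ X.l (E + D) by
    intro D hD E; exact H _ D rfl hD E
  intro m
  induction m using Nat.strong_induction_on with
  | _ m ih =>
  intro D hm hD E
  have hdD : 0 ≤ degr D := le_of_not_gt fun h => hD (X.l_neg h)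
  rcases eq_or_lt_of_le hdD with h0 | h0
  · have hlin := X.lin_of_deg_zero hD h0.symm
    have h1 : X.l (D + E) = X.l (0 + E) := X.l_lin (X.lin_add E hlin)
    rw [zero_add, add_comm] at h1
    omega
  · by_cases hex : ∃ P : Point, X.l (D - Finsupp.single P 1) ≠ 0
    · obtain ⟨P, hP⟩ := hex
      have hdeg : degr (D - Finsupp.single P 1) = degr D - 1 := by
        rw [degr_sub, degr_single]
      have h1 : X.l E ≤ X.l (E + (D - Finsupp.single P 1)) := by
        apply ih (degr (D - Finsupp.single P 1)).toNat (by omega) _ rfl hP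
      have h2 := X.l_mono (E + (D - Finsupp.single P 1)) P
      have h3 : E + (D - Finsupp.single P 1) + Finsupp.single P 1 = E + D := by abel
      rw [h3] at h2
      omega
    · push_neg at hex
      have hDg : ∀ P : Point, X.l D ≠ X.l (D - Finsupp.single P 1) := fun P => by
        rw [hex P]; exact hD
      exact l_add_mono_of_forall X D hDg E

lemma l_sub_le_degr {D : Point →₀ ℤ} (hD : X.l D ≠ 0) (F : Point →₀ ℤ) :
    (X.l F : ℤ) - X.l (F - D) ≤ degr D := by
  have h1 := X.rr F
  have h2 := X.rr (F - D)
  have h3 : X.K - (F - D) = (X.K - F) + D := by abel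
  rw [h3] at h2
  have h4 := l_add_mono X D hD (X.K - F)
  have h5 : degr (F - D) = degr F - degr D := degr_sub F D
  rw [h5] at h2
  omega

end Mono

lemma telescope_Icc (h : ℕ → ℤ) (n : ℕ) :
    ∑ i ∈ Finset.Icc 1 n, (h i - h (i - 1)) = h n - h 0 := by
  induction n with
  | zero => rw [Finset.Icc_eq_empty (by omega)]; simp
  | succ n ih =>
      rw [Finset.sum_Icc_succ_top (by omega : 1 ≤ n + 1), ih]
      simp only [Nat.add_sub_cancel]
      ring

/-- (Main order-bound theorem) Let `C` be a divisor, `S` and `S'` finite sets of rational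
points, and `A_0, A_1, ..., A_n` a sequence of divisors with `A_i = A_{i-1} + P_i` for
rational points `P_i`.  With
`Δ  = {i : A_i ∈ Γ_{P_i} and A_i - C ∉ Γ_{P_i}}`,
`Δ' = {i : A_i ∉ Γ_{P_i} and A_i - C ∈ Γ_{P_i}}`,
`I = {i : P_i ∈ S}` and `I' = {i : P_i ∈ S'}`, one has
`γ(C; S, S') ≥ |Δ ∩ I'| + |Δ' ∩ I| - |Δ'|`. -/
theorem main_order_bound (X : Curve Point) (C : Point →₀ ℤ) (S S' : Finset Point)
    (n : ℕ) (A : ℕ → Point →₀ ℤ) (P : ℕ → Point)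
    (hA : ∀ i, 1 ≤ i → i ≤ n → A i = A (i - 1) + Finsupp.single (P i) 1)
    (hne : (GammaSet X C S S').Nonempty) :
    ((Delta X C n A P ∩ {i | P i ∈ S'}).ncard : ℤ)
        + ((Delta' X C n A P ∩ {i | P i ∈ S}).ncard : ℤ)
        - ((Delta' X C n A P).ncard : ℤ)
      ≤ gammaMin X C S S' := by
  classical
  -- a minimal-degree element D of Γ(C;S,S')
  have hTne : (degr '' GammaSet X C S S').Nonempty := hne.image _
  have hbdd : BddBelow (degr '' GammaSet X C S S') := by
    refine ⟨0, ?_⟩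
    rintro x ⟨B, hB, rfl⟩
    have h1 : X.l B ≠ 0 := gammaS_l_ne_zero X hB.1
    exact le_of_not_gt fun h => h1 (X.l_neg h)
  obtain ⟨D, hDmem, hDdeg⟩ := Int.csInf_mem hTne hbdd
  have hmin : ∀ B ∈ GammaSet X C S S', degr D ≤ degr B := by
    intro B hB
    rw [hDdeg]
    exact csInf_le hbdd ⟨B, hB, rfl⟩
  have hDl : X.l D ≠ 0 := gammaS_l_ne_zero X hDmem.1
  have hDCl : X.l (D - C) ≠ 0 := gammaS_l_ne_zero X hDmem.2
  -- no common base point of D and D - C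
  have hbp : ∀ Q : Point, D ∈ GammaP X Q ∨ D - C ∈ GammaP X Q := by
    intro Q
    by_contra hcon
    push_neg at hcon
    obtain ⟨h1, h2⟩ := hcon
    simp only [GammaP, Set.mem_setOf_eq, not_not] at h1 h2
    have hmem2 : D - Finsupp.single Q 1 ∈ GammaSet X C S S' := by
      refine ⟨⟨fun _ => ?_, fun R hR => ?_⟩, fun _ => ?_, fun R hR => ?_⟩
      · rw [← h1]; exact hDl
      · have hR2 := gammaP_succ X (hDmem.1.2 R hR)
        have h4 := l_sub_le X (D - Finsupp.single R 1) Q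
        show X.l (D - Finsupp.single Q 1)
            ≠ X.l (D - Finsupp.single Q 1 - Finsupp.single R 1)
        rw [sub_right_comm]
        omega
      · show X.l (D - Finsupp.single Q 1 - C) ≠ 0
        rw [sub_right_comm, ← h2]
        exact hDCl
      · have hR2 := gammaP_succ X (hDmem.2.2 R hR)
        have h4 := l_sub_le X (D - C - Finsupp.single R 1) Q
        have e4 : D - C - Finsupp.single R 1 - Finsupp.single Q 1
            = D - C - Finsupp.single Q 1 - Finsupp.single R 1 := by abel
        rw [e4] at h4
        have e3 : D - Finsupp.single Q 1 - C = D - C - Finsupp.single Q 1 := by abel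
        show X.l (D - Finsupp.single Q 1 - C)
            ≠ X.l (D - Finsupp.single Q 1 - C - Finsupp.single R 1)
        rw [e3]
        omega
    have h5 := hmin _ hmem2
    have h6 : degr (D - Finsupp.single Q 1) = degr D - 1 := by
      rw [degr_sub, degr_single]
    omega
  -- the pointwise inequality along the chain
  have key : ∀ i ∈ Finset.Icc 1 n,
      ((if i ∈ Delta X C n A P ∧ P i ∈ S' then (1 : ℤ) else 0)
        - (if i ∈ Delta' X C n A P ∧ P i ∉ S then (1 : ℤ) else 0))
      ≤ (((X.l (A i) : ℤ) - X.l (A i - D))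
          - ((X.l (A (i - 1)) : ℤ) - X.l (A (i - 1) - D))) := by
    intro i hi
    rw [Finset.mem_Icc] at hi
    obtain ⟨hi1, hin⟩ := hi
    have hAprev : A (i - 1) = A i - Finsupp.single (P i) 1 := by
      rw [hA i hi1 hin, add_sub_cancel_right]
    have hcm : A i - Finsupp.single (P i) 1 - D = A i - D - Finsupp.single (P i) 1 :=
      sub_right_comm _ _ _
    rw [hAprev, hcm]
    have hb0 := l_sub_le X (A i) (P i)
    have hb1 := l_le_sub_succ X (A i) (P i)
    have hc0 := l_sub_le X (A i - D) (P i)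
    have hc1 := l_le_sub_succ X (A i - D) (P i)
    by_cases h1 : i ∈ Delta X C n A P ∧ P i ∈ S'
    · obtain ⟨hΔ, hS'⟩ := h1
      obtain ⟨-, -, hg, hgc⟩ := hΔ
      have hb : X.l (A i) = X.l (A i - Finsupp.single (P i) 1) + 1 := gammaP_succ X hg
      have hDC : X.l (D - C) ≠ X.l (D - C - Finsupp.single (P i) 1) :=
        hDmem.2.2 (P i) hS'
      have hc : X.l (A i - D) = X.l (A i - D - Finsupp.single (P i) 1) := by
        by_contra hcne
        have h2 := X.gamma_add (P i) hcne hDC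
        have h3 : A i - D + (D - C) = A i - C := by abel
        rw [h3] at h2
        exact hgc h2
      have hnB : ¬ (i ∈ Delta' X C n A P ∧ P i ∉ S) := fun hB => hB.1.2.2.1 hg
      rw [if_pos ⟨⟨hi1, hin, hg, hgc⟩, hS'⟩, if_neg hnB]
      push_cast
      omega
    · by_cases h2 : i ∈ Delta' X C n A P ∧ P i ∉ S
      · rw [if_neg h1, if_pos h2]
        push_cast
        omega
      · rw [if_neg h1, if_neg h2]
        by_cases hAD : A i - D ∈ GammaP X (P i)
        · have hADne : X.l (A i - D) ≠ X.l (A i - D - Finsupp.single (P i) 1) := hAD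
          have hAi : A i ∈ GammaP X (P i) := by
            rcases hbp (P i) with hq | hq
            · have h3 := X.gamma_add (P i) hADne hq
              have h4 : A i - D + D = A i := by abel
              rwa [h4] at h3
            · have h3 := X.gamma_add (P i) hADne hq
              have h4 : A i - D + (D - C) = A i - C := by abel
              rw [h4] at h3
              by_contra hAg
              have hPiS : P i ∈ S := by
                by_contra hps
                exact h2 ⟨⟨hi1, hin, hAg, h3⟩, hps⟩
              have hq2 : X.l D ≠ X.l (D - Finsupp.single (P i) 1) :=
                hDmem.1.2 (P i) hPiS
              have h5 := X.gamma_add (P i) hADne hq2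
              have h6 : A i - D + D = A i := by abel
              rw [h6] at h5
              exact hAg h5
          have hb := gammaP_succ X hAi
          have hc := gammaP_succ X hAD
          push_cast
          omega
        · simp only [GammaP, Set.mem_setOf_eq, not_not] at hAD
          push_cast
          omega
  -- sum the pointwise inequality and telescope
  have hsum := Finset.sum_le_sum key
  have htel := telescope_Icc (fun j => (X.l (A j) : ℤ) - X.l (A j - D)) n
  rw [htel] at hsum
  -- bounds at the two ends
  have hfn : (X.l (A n) : ℤ) - X.l (A n - D) ≤ degr D := l_sub_le_degr X hDl (A n)
  have hf0 : (0 : ℤ) ≤ (X.l (A 0) : ℤ) - X.l (A 0 - D) := by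
    have h1 := l_add_mono X D hDl (A 0 - D)
    rw [sub_add_cancel] at h1
    omega
  -- rewrite the sum of indicators as cardinalities
  rw [Finset.sum_sub_distrib, Finset.sum_boole, Finset.sum_boole] at hsum
  -- identify the ncard's with the filtered cards
  have cA : (Delta X C n A P ∩ {i | P i ∈ S'}).ncard
      = ((Finset.Icc 1 n).filter (fun i => i ∈ Delta X C n A P ∧ P i ∈ S')).card := by
    rw [← Set.ncard_coe_finset]
    congr 1
    ext i
    simp only [Finset.coe_filter, Finset.mem_Icc, Set.mem_setOf_eq, Set.mem_inter_iff,
      Delta]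
    constructor
    · rintro ⟨⟨ha, hb, hc, hd⟩, he⟩
      exact ⟨⟨ha, hb⟩, ⟨ha, hb, hc, hd⟩, he⟩
    · rintro ⟨-, h⟩
      exact h
  have cC : (Delta' X C n A P ∩ {i | P i ∈ S}).ncard
      = ((Finset.Icc 1 n).filter (fun i => i ∈ Delta' X C n A P ∧ P i ∈ S)).card := by
    rw [← Set.ncard_coe_finset]
    congr 1
    ext i
    simp only [Finset.coe_filter, Finset.mem_Icc, Set.mem_setOf_eq, Set.mem_inter_iff,
      Delta']
    constructor
    · rintro ⟨⟨ha, hb, hc, hd⟩, he⟩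
      exact ⟨⟨ha, hb⟩, ⟨ha, hb, hc, hd⟩, he⟩
    · rintro ⟨-, h⟩
      exact h
  have cD : (Delta' X C n A P).ncard
      = ((Finset.Icc 1 n).filter (fun i => i ∈ Delta' X C n A P)).card := by
    rw [← Set.ncard_coe_finset]
    congr 1
    ext i
    simp only [Finset.coe_filter, Finset.mem_Icc, Set.mem_setOf_eq, Delta']
    constructor
    · rintro ⟨ha, hb, hc, hd⟩
      exact ⟨⟨ha, hb⟩, ha, hb, hc, hd⟩
    · rintro ⟨-, h⟩
      exact h
  -- split |Δ'| into the part with P i ∈ S and its complement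
  have hsplit : ((Finset.Icc 1 n).filter (fun i => i ∈ Delta' X C n A P ∧ P i ∈ S)).card
      + ((Finset.Icc 1 n).filter (fun i => i ∈ Delta' X C n A P ∧ P i ∉ S)).card
      = ((Finset.Icc 1 n).filter (fun i => i ∈ Delta' X C n A P)).card := by
    have h1 := Finset.card_filter_add_card_filter_not
      (s := (Finset.Icc 1 n).filter (fun i => i ∈ Delta' X C n A P))
      (fun i => P i ∈ S)
    rw [Finset.filter_filter, Finset.filter_filter] at h1
    exact h1
  rw [cA, cC, cD, ← hsplit]
  rw [hDdeg] at hfn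
  have hgm : gammaMin X C S S' = sInf (degr '' GammaSet X C S S') := rfl
  rw [hgm]
  push_cast at hsum ⊢
  omega
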